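/- Let α₁, α₂ > 0 be real numbers with α₁ − α₂ ≥ e·tan(1/2). Let p : ℂ → ℂ be analytic on the open unit disk 𝔻 with p(0) = 1, and suppose that for every z ∈ 𝔻 the value w(z) = 1 + α₁·z·p'(z) + α₂·z²·p''(z) satisfies w(z) ≠ 2 and |Log(w(z)/(2 − w(z)))| < 1. Then for every z ∈ 𝔻, |Log(p(z))| < 1. -/

import Mathlib

open Complex Metric Set Filter

lemma sin_half_ub : Real.sin (1/2) ≤ 0.4825 := by
  have h := Real.sin_bound (x := 1/2) (by rw [abs_of_pos]; norm_num; norm_num)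
  rw [abs_le] at h
  rw [abs_of_pos (by norm_num : (0:ℝ) < 1/2)] at h
  norm_num at h ⊢
  linarith [h.2]

lemma sin_half_lb : (0.4759:ℝ) ≤ Real.sin (1/2) := by
  have h := Real.sin_bound (x := 1/2) (by rw [abs_of_pos]; norm_num; norm_num)
  rw [abs_le] at h
  rw [abs_of_pos (by norm_num : (0:ℝ) < 1/2)] at h
  norm_num at h ⊢
  linarith [h.1]

lemma cos_half_ub : Real.cos (1/2) ≤ 0.8783 := by
  have h := Real.cos_bound (x := 1/2) (by rw [abs_of_pos]; norm_num; norm_num)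
  rw [abs_le] at h
  rw [abs_of_pos (by norm_num : (0:ℝ) < 1/2)] at h
  norm_num at h ⊢
  linarith [h.2]

lemma cos_one_lb : (0.534:ℝ) ≤ Real.cos 1 := by
  have h2 : Real.cos 1 = 1 - 2 * Real.sin (1/2) ^ 2 := by
    have h3 := Real.cos_two_mul (1/2 : ℝ)
    norm_num at h3
    rw [h3]
    have := Real.sin_sq_add_cos_sq (1/2 : ℝ)
    linarith
  rw [h2]
  have h1 := sin_half_ub
  have h0 : (0:ℝ) ≤ Real.sin (1/2) := by
    have := sin_half_lb; linarith
  nlinarith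

lemma cosh_one_ub : Real.cosh 1 ≤ 1.5431 := by
  rw [Real.cosh_eq]
  have h1 := Real.exp_one_lt_d9
  have h2 := Real.exp_one_gt_d9
  have h3 : Real.exp (-1) = (Real.exp 1)⁻¹ := by rw [Real.exp_neg]
  rw [h3]
  have h4 : (Real.exp 1)⁻¹ ≤ 0.36787945 := by
    rw [inv_le_comm₀ (by positivity) (by norm_num)]
    nlinarith
  norm_num at h1 h4 ⊢
  linarith

lemma tan_half_lb : (0.5418:ℝ) ≤ Real.tan (1/2) := by
  rw [Real.tan_eq_sin_div_cos]
  have hc : (0:ℝ) < Real.cos (1/2) := by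
    apply Real.cos_pos_of_mem_Ioo
    constructor
    · nlinarith [Real.pi_gt_three]
    · nlinarith [Real.pi_gt_three]
  have h1 := sin_half_lb
  have h2 := cos_half_ub
  rw [le_div_iff₀ hc]
  nlinarith

lemma norm_log_one_add_le {ζ : ℂ} (h : ‖ζ‖ < 1) :
    ‖(Complex.log (1 + ζ))‖ ≤ ‖ζ‖ / (1 - ‖ζ‖) := by
  set a := ‖ζ‖ with ha
  have ha0 : 0 ≤ a := norm_nonneg ζ
  have h1a : 0 < 1 - a := by linarith
  -- the path
  set g : ℝ → ℂ := fun t => Complex.log (1 + (t:ℂ) * ζ) with hg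
  have hmem : ∀ t : ℝ, t ∈ Icc (0:ℝ) 1 → (1 + (t:ℂ) * ζ) ∈ Complex.slitPlane := by
    intro t ht
    left
    simp only [Complex.add_re, Complex.one_re, Complex.mul_re, Complex.ofReal_re,
      Complex.ofReal_im, zero_mul, sub_zero]
    have h1 : |ζ.re| ≤ a := Complex.abs_re_le_norm ζ
    have h2 : |t * ζ.re| ≤ a := by
      rw [abs_mul, _root_.abs_of_nonneg ht.1]
      calc t * |ζ.re| ≤ 1 * a := by
            apply mul_le_mul ht.2 h1 (abs_nonneg _) zero_le_one
        _ = a := one_mul a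
    have := neg_abs_le (t * ζ.re)
    linarith
  have hne : ∀ t : ℝ, t ∈ Icc (0:ℝ) 1 → (1 + (t:ℂ) * ζ) ≠ 0 := by
    intro t ht
    exact Complex.slitPlane_ne_zero (hmem t ht)
  have hnorm : ∀ t : ℝ, t ∈ Icc (0:ℝ) 1 → 1 - a ≤ ‖(1 + (t:ℂ) * ζ)‖ := by
    intro t ht
    have h2 : ‖((t:ℂ) * ζ)‖ ≤ a := by
      rw [norm_mul, Complex.norm_real, Real.norm_eq_abs, _root_.abs_of_nonneg ht.1]
      nlinarith [ht.2]
    calc 1 - a ≤ 1 - ‖((t:ℂ) * ζ)‖ := by linarith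
      _ ≤ ‖(1 + (t:ℂ) * ζ)‖ := by
          have h5 := norm_sub_norm_le (1:ℂ) (-((t:ℂ) * ζ))
          simp only [sub_neg_eq_add, norm_neg, norm_one] at h5
          linarith
  have hderiv : ∀ t ∈ Icc (0:ℝ) 1,
      HasDerivWithinAt g (ζ • (1 + (t:ℂ) * ζ)⁻¹) (Icc (0:ℝ) 1) t := by
    intro t ht
    have hlin : HasDerivAt (fun s : ℝ => 1 + (s:ℂ) * ζ) ζ t := by
      simpa using (((hasDerivAt_id t).ofReal_comp).mul_const ζ).const_add 1
    have hlog : HasDerivAt Complex.log (1 + (t:ℂ) * ζ)⁻¹ (1 + (t:ℂ) * ζ) :=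
      Complex.hasDerivAt_log (hmem t ht)
    exact (HasDerivAt.scomp t hlog hlin).hasDerivWithinAt
  have hbound : ∀ t ∈ Ico (0:ℝ) 1, ‖ζ • (1 + (t:ℂ) * ζ)⁻¹‖ ≤ a / (1 - a) := by
    intro t ht
    have ht' : t ∈ Icc (0:ℝ) 1 := Ico_subset_Icc_self ht
    rw [norm_smul, norm_inv]
    have h3 := hnorm t ht'
    have h4 : (0:ℝ) < ‖(1 + (t:ℂ) * ζ)‖ := lt_of_lt_of_le h1a h3
    rw [div_eq_mul_inv]
    apply mul_le_mul (le_refl _) _ (by positivity) ha0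
    apply inv_anti₀ h1a
    simpa using h3
  have key := norm_image_sub_le_of_norm_deriv_le_segment' hderiv hbound 1 (by norm_num)
  simp only [hg] at key
  norm_num at key
  simpa using key

lemma sigmoid_bound {W : ℂ} (hW0 : W ≠ 0) (hW2 : W ≠ 2)
    (hu : ‖(Complex.log (W / (2 - W)))‖ < 1) :
    ‖(W - 1)‖ < 0.7 := by
  have h2W : (2:ℂ) - W ≠ 0 := sub_ne_zero.mpr (Ne.symm hW2)
  set ζ : ℂ := W / (2 - W) with hζ
  have hζ0 : ζ ≠ 0 := div_ne_zero hW0 h2W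
  set u : ℂ := Complex.log ζ with hudef
  have hexp : Complex.exp u = ζ := Complex.exp_log hζ0
  -- algebra : (W - 1) * (ζ + 1) = ζ - 1
  have key : (W - 1) * (ζ + 1) = ζ - 1 := by
    rw [hζ]
    field_simp
    ring
  have hζ1 : ζ + 1 ≠ 0 := by
    intro h
    rw [h, mul_zero] at key
    have : ζ = 1 := by
      have := key.symm
      rwa [sub_eq_zero] at this
    rw [this] at h
    norm_num at h
  have habs : ‖(W - 1)‖ = ‖(ζ - 1)‖ / ‖(ζ + 1)‖ := by
    rw [eq_div_iff (by simpa using hζ1)]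
    rw [← norm_mul]
    rw [key]
  set x : ℝ := u.re with hx
  set y : ℝ := u.im with hy
  have hex : (0:ℝ) < Real.exp x := Real.exp_pos x
  have hxa : |x| < 1 := lt_of_le_of_lt (Complex.abs_re_le_norm u) hu
  have hya : |y| < 1 := lt_of_le_of_lt (Complex.abs_im_le_norm u) hu
  have hre : ζ.re = Real.exp x * Real.cos y := by
    rw [← hexp]; exact Complex.exp_re u
  have him : ζ.im = Real.exp x * Real.sin y := by
    rw [← hexp]; exact Complex.exp_im u
  have hsq1 : ‖(ζ - 1)‖ ^ 2
      = Real.exp x ^ 2 - 2 * Real.exp x * Real.cos y + 1 := by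
    rw [Complex.sq_norm, Complex.normSq_apply]
    simp only [Complex.sub_re, Complex.sub_im, Complex.one_re, Complex.one_im, sub_zero]
    rw [hre, him]
    nlinarith [Real.sin_sq_add_cos_sq y]
  have hsq2 : ‖(ζ + 1)‖ ^ 2
      = Real.exp x ^ 2 + 2 * Real.exp x * Real.cos y + 1 := by
    rw [Complex.sq_norm, Complex.normSq_apply]
    simp only [Complex.add_re, Complex.add_im, Complex.one_re, Complex.one_im, add_zero]
    rw [hre, him]
    nlinarith [Real.sin_sq_add_cos_sq y]
  -- cosh and cos estimates
  have hcosh : Real.cosh x < Real.cosh 1 := by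
    rw [Real.cosh_lt_cosh]
    simpa using hxa
  have hcos : Real.cos 1 < Real.cos y := by
    rw [← Real.cos_abs y]
    apply Real.cos_lt_cos_of_nonneg_of_le_pi (abs_nonneg y) _ hya
    linarith [Real.pi_gt_three]
  have hcoshx : Real.exp x + Real.exp (-x) = 2 * Real.cosh x := by
    rw [Real.cosh_eq]; ring
  have hexpnegx : Real.exp (-x) = (Real.exp x)⁻¹ := Real.exp_neg x
  -- main numeric inequality
  have hmain : Real.exp x ^ 2 - 2 * Real.exp x * Real.cos y + 1
      < 0.49 * (Real.exp x ^ 2 + 2 * Real.exp x * Real.cos y + 1) := by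
    have h1 : Real.exp x + (Real.exp x)⁻¹ < 2 * 1.5431 := by
      rw [← hexpnegx, hcoshx]
      have := cosh_one_ub
      linarith
    have h2 : Real.exp x ^ 2 + 1 < 3.0862 * Real.exp x := by
      have h3 : Real.exp x * (Real.exp x + (Real.exp x)⁻¹) = Real.exp x ^ 2 + 1 := by
        field_simp
      nlinarith
    have h4 : (0.534:ℝ) < Real.cos y := lt_of_le_of_lt cos_one_lb hcos
    nlinarith
  have hpos2 : (0:ℝ) < ‖(ζ + 1)‖ := by
    simpa [norm_pos_iff] using hζ1
  rw [habs, div_lt_iff₀ hpos2]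
  have hfin : ‖(ζ - 1)‖ ^ 2 < (0.7 * ‖(ζ + 1)‖) ^ 2 := by
    rw [hsq1]
    have : (0.7 * ‖(ζ + 1)‖) ^ 2 = 0.49 * (‖(ζ + 1)‖ ^2) := by ring
    rw [this, hsq2]
    exact hmain
  exact lt_of_pow_lt_pow_left₀ 2 (by positivity) hfin

lemma stepD {α₁ α₂ : ℝ} (h₁ : 0 < α₁) (h₂ : 0 < α₂) (hd : 0 < α₁ - α₂)
    (p : ℂ → ℂ) (hp1 : AnalyticOnNhd ℂ (deriv p) (Metric.ball (0:ℂ) 1))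
    (hF : ∀ ζ ∈ Metric.ball (0:ℂ) 1,
      ‖((α₁:ℂ) * ζ * deriv p ζ + (α₂:ℂ) * ζ^2 * deriv (deriv p) ζ)‖
        ≤ 0.7 * ‖ζ‖)
    {z : ℂ} (hz : z ∈ Metric.ball (0:ℂ) 1) :
    ‖(z * deriv p z)‖ ≤ 0.7 * ‖z‖ / α₁ := by
  set β : ℝ := (α₁ - α₂) / α₂ with hβdef
  have hβ : 0 < β := div_pos hd h₂
  have hβ1 : 1 ≤ β + 1 := by linarith
  have hab : α₂ * (β + 1) = α₁ := by
    rw [hβdef, mul_add, mul_div_cancel₀ _ h₂.ne']; ring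
  have hzn : ‖z‖ < 1 := by simpa using hz
  set φ : ℝ → ℂ := fun s => ((s ^ (β+1) : ℝ) : ℂ) * (z * deriv p ((s:ℂ) * z)) with hφdef
  set Dφ : ℝ → ℂ := fun s => (((β+1) * s ^ β : ℝ) : ℂ) * (z * deriv p ((s:ℂ) * z))
      + ((s ^ (β+1) : ℝ) : ℂ) * (z * (z * deriv (deriv p) ((s:ℂ) * z))) with hDφdef
  have hmem : ∀ s ∈ Icc (0:ℝ) 1, (s:ℂ) * z ∈ Metric.ball (0:ℂ) 1 := by
    intro s hs
    simp only [Metric.mem_ball, dist_zero_right, norm_mul,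
      Complex.norm_real, Real.norm_eq_abs]
    rw [_root_.abs_of_nonneg hs.1]
    calc s * ‖z‖ ≤ 1 * ‖z‖ := by
          apply mul_le_mul_of_nonneg_right hs.2 (norm_nonneg z)
      _ < 1 := by simpa using hzn
  have hφd : ∀ s ∈ Icc (0:ℝ) 1, HasDerivAt φ (Dφ s) s := by
    intro s hs
    have hd1 : HasDerivAt (fun t:ℝ => t ^ (β+1)) ((β+1) * s ^ β) s := by
      have := Real.hasDerivAt_rpow_const (x := s) (p := β+1) (Or.inr hβ1)
      simpa using this
    have hd1' : HasDerivAt (fun t:ℝ => ((t ^ (β+1) : ℝ) : ℂ)) (((β+1) * s ^ β : ℝ) : ℂ) s :=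
      hd1.ofReal_comp
    have hlin : HasDerivAt (fun t:ℝ => (t:ℂ) * z) z s := by
      simpa using ((hasDerivAt_id s).ofReal_comp.mul_const z)
    have hp' : HasDerivAt (deriv p) (deriv (deriv p) ((s:ℂ)*z)) ((s:ℂ)*z) :=
      ((hp1 _ (hmem s hs)).differentiableAt).hasDerivAt
    have hd2 : HasDerivAt (fun t:ℝ => deriv p ((t:ℂ)*z)) (z * deriv (deriv p) ((s:ℂ)*z)) s := by
      have := HasDerivAt.scomp s hp' hlin
      simpa [Function.comp_def, smul_eq_mul] using this
    have hd3 : HasDerivAt (fun t:ℝ => z * deriv p ((t:ℂ)*z))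
        (z * (z * deriv (deriv p) ((s:ℂ)*z))) s := hd2.const_mul z
    have := hd1'.mul hd3
    simpa [hφdef, hDφdef, Pi.mul_def] using this
  have hbound : ∀ s ∈ Ico (0:ℝ) 1, ‖Dφ s‖ ≤ (0.7 * ‖z‖ / α₁) * ((β+1) * s ^ β) := by
    intro s hs
    have hcoef : (0.7 * ‖z‖ / α₁) * ((β+1) * s ^ β)
        = 0.7 * ‖z‖ / α₂ * s ^ β := by
      rw [← hab]; field_simp
    rw [hcoef]
    rcases eq_or_lt_of_le hs.1 with h0|h0
    · rw [← h0]
      simp [hDφdef, Real.zero_rpow hβ.ne', Real.zero_rpow (by positivity : β + 1 ≠ 0)]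
    · -- s > 0
      have e1 : s ^ β = s ^ (β-1) * s := by
        rw [show β = (β-1)+1 by ring, Real.rpow_add_one h0.ne']
        ring_nf
      have hid : Dφ s = ((s ^ (β-1) / α₂ : ℝ) : ℂ)
          * ((α₁:ℂ) * ((s:ℂ)*z) * deriv p ((s:ℂ)*z)
             + (α₂:ℂ) * ((s:ℂ)*z)^2 * deriv (deriv p) ((s:ℂ)*z)) := by
        have e2 : s ^ (β+1) = s ^ (β-1) * s * s := by
          rw [show β + 1 = ((β-1)+1)+1 by ring, Real.rpow_add_one h0.ne',
            Real.rpow_add_one h0.ne']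
        have e3 : (β + 1) = α₁ / α₂ := by
          field_simp [hβdef]
          linarith [hab]
        simp only [hDφdef]
        rw [e1, e2, e3]
        have hα₂c : (α₂:ℂ) ≠ 0 := Complex.ofReal_ne_zero.mpr h₂.ne'
        push_cast
        field_simp
      rw [hid]
      rw [norm_mul]
      have h5 : ‖(((s ^ (β-1) / α₂ : ℝ)) : ℂ)‖ = s ^ (β-1) / α₂ := by
        rw [Complex.norm_real, Real.norm_eq_abs, _root_.abs_of_nonneg]
        positivity
      rw [h5]
      have h6 := hF _ (hmem s (Ico_subset_Icc_self hs))
      have h7 : ‖((s:ℂ) * z)‖ = s * ‖z‖ := by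
        rw [norm_mul, Complex.norm_real, Real.norm_eq_abs, _root_.abs_of_nonneg hs.1] 
      calc s ^ (β-1) / α₂ * ‖((α₁:ℂ) * ((s:ℂ)*z) * deriv p ((s:ℂ)*z)
             + (α₂:ℂ) * ((s:ℂ)*z)^2 * deriv (deriv p) ((s:ℂ)*z))‖
          ≤ s ^ (β-1) / α₂ * (0.7 * (s * ‖z‖)) := by
            apply mul_le_mul_of_nonneg_left _ (by positivity)
            rw [← h7]
            exact h6
        _ = 0.7 * ‖z‖ / α₂ * s ^ β := by
            rw [e1]; field_simp
  -- apply the fencing theorem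
  have hB : ∀ x : ℝ, HasDerivAt (fun s : ℝ => (0.7 * ‖z‖ / α₁) * s ^ (β+1))
      ((0.7 * ‖z‖ / α₁) * ((β+1) * x ^ β)) x := by
    intro x
    have := (Real.hasDerivAt_rpow_const (x := x) (p := β+1) (Or.inr hβ1)).const_mul
      (0.7 * ‖z‖ / α₁)
    simpa using this
  have key := image_norm_le_of_norm_deriv_right_le_deriv_boundary
    (f := φ) (f' := Dφ) (a := 0) (b := 1)
    (fun s hs => (hφd s hs).continuousAt.continuousWithinAt)
    (fun s hs => (hφd s (Ico_subset_Icc_self hs)).hasDerivWithinAt)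
    (by simp [hφdef, Real.zero_rpow (by positivity : β + 1 ≠ 0)])
    hB hbound (right_mem_Icc.mpr zero_le_one)
  simp only [hφdef] at key
  rw [Real.one_rpow] at key
  simp only [Complex.ofReal_one, one_mul] at key
  simpa using key

theorem subordination_sigmoid (α₁ α₂ : ℝ) (h₁ : 0 < α₁) (h₂ : 0 < α₂)
    (hcond : α₁ - α₂ ≥ Real.exp 1 * Real.tan (1/2))
    (p : ℂ → ℂ) (hp : DifferentiableOn ℂ p (Metric.ball (0:ℂ) 1)) (hp0 : p 0 = 1)
    (hne : ∀ z ∈ Metric.ball (0:ℂ) 1,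
      1 + α₁ * z * deriv p z + α₂ * z^2 * deriv (deriv p) z ≠ 2)
    (hsub : ∀ z ∈ Metric.ball (0:ℂ) 1,
      ‖(Complex.log ((1 + α₁ * z * deriv p z + α₂ * z^2 * deriv (deriv p) z) /
        (2 - (1 + α₁ * z * deriv p z + α₂ * z^2 * deriv (deriv p) z))))‖ < 1) :
    ∀ z ∈ Metric.ball (0:ℂ) 1, ‖(Complex.log (p z))‖ < 1 := by
  -- basic bounds on the constants
  have het : (1.4727:ℝ) < Real.exp 1 * Real.tan (1/2) := by
    have h1 := Real.exp_one_gt_d9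
    have h2 := tan_half_lb
    nlinarith
  have hds : 0 < α₁ - α₂ := by linarith
  have hα₁ : (1.4727:ℝ) < α₁ := by linarith
  -- analyticity
  have hA : AnalyticOnNhd ℂ p (Metric.ball (0:ℂ) 1) := hp.analyticOnNhd isOpen_ball
  have hA1 : AnalyticOnNhd ℂ (deriv p) (Metric.ball (0:ℂ) 1) := hA.deriv
  have hA2 : AnalyticOnNhd ℂ (deriv (deriv p)) (Metric.ball (0:ℂ) 1) := hA1.deriv
  set W : ℂ → ℂ := fun z => 1 + (α₁:ℂ) * z * deriv p z + (α₂:ℂ) * z^2 * deriv (deriv p) z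
    with hWdef
  have hne' : ∀ y ∈ Metric.ball (0:ℂ) 1, W y ≠ 2 := by
    intro y hy; simp only [hWdef]; exact hne y hy
  have hsub' : ∀ y ∈ Metric.ball (0:ℂ) 1,
      ‖(Complex.log (W y / (2 - W y)))‖ < 1 := by
    intro y hy; simp only [hWdef]; exact hsub y hy
  have hW0 : W 0 = 1 := by simp [hWdef]
  have hWanal : AnalyticOnNhd ℂ W (Metric.ball (0:ℂ) 1) := by
    rw [hWdef]
    exact (analyticOnNhd_const.add ((analyticOnNhd_const.mul analyticOnNhd_id).mul hA1)).add
      ((analyticOnNhd_const.mul (analyticOnNhd_id.pow 2)).mul hA2)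
  -- Step A : W is nonvanishing on the disk
  have hWne : ∀ y ∈ Metric.ball (0:ℂ) 1, W y ≠ 0 := by
    intro y hy h0
    rcases (hWanal y hy).eventually_eq_zero_or_eventually_ne_zero with hc | hc
    · have hEq : Set.EqOn W 0 (Metric.ball (0:ℂ) 1) :=
        hWanal.eqOn_zero_of_preconnected_of_eventuallyEq_zero
          ((convex_ball (0:ℂ) 1).isPreconnected) hy (hc.mono (fun x hx => hx))
      have h1 := hEq (Metric.mem_ball_self one_pos)
      rw [hW0] at h1
      norm_num at h1
    · have hcont : ContinuousAt W y := (hWanal y hy).continuousAt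
      have htend : Filter.Tendsto W (nhds y) (nhds 0) := by
        rw [← h0]; exact hcont
      have hsmall : ∀ᶠ t in nhds y, ‖(W t)‖ < 0.3 := by
        have h5 := htend (Metric.ball_mem_nhds (0:ℂ) (by norm_num : (0:ℝ) < 0.3))
        filter_upwards [h5] with t ht
        simpa [Metric.mem_ball, dist_zero_right] using ht
      have hmemD : ∀ᶠ t in nhds y, t ∈ Metric.ball (0:ℂ) 1 := isOpen_ball.mem_nhds hy
      have hall := ((hsmall.and hmemD).filter_mono nhdsWithin_le_nhds).and hc
      obtain ⟨t, ⟨ht1, ht2⟩, ht3⟩ := hall.exists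
      -- at t : |W t| < 0.3, t ∈ ball, W t ≠ 0
      have h2t : (2:ℂ) - W t ≠ 0 := sub_ne_zero.mpr (Ne.symm (hne' t ht2))
      have habs2 : (1.7:ℝ) ≤ ‖(2 - W t)‖ := by
        have h5 := norm_sub_norm_le (2:ℂ) (W t)
        have : ‖(2:ℂ)‖ = 2 := by norm_num
        rw [this] at h5
        linarith
      set ζt : ℂ := W t / (2 - W t) with hζt
      have hζ0 : ζt ≠ 0 := div_ne_zero ht3 h2t
      have hζa : ‖ζt‖ ≤ 3/17 := by
        rw [hζt, norm_div]
        rw [div_le_div_iff₀ (by positivity) (by norm_num)]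
        nlinarith [norm_nonneg (W t)]
      have hζpos : 0 < ‖ζt‖ := norm_pos_iff.mpr hζ0
      have hlogle : Real.log (‖ζt‖) ≤ Real.log (3/17) :=
        Real.log_le_log hζpos hζa
      have hlog17 : 1 < Real.log (17/3) := by
        rw [Real.lt_log_iff_exp_lt (by norm_num)]
        have := Real.exp_one_lt_d9
        linarith
      have hloginv : Real.log ((3:ℝ)/17) = - Real.log (17/3) := by
        rw [show ((3:ℝ)/17) = ((17:ℝ)/3)⁻¹ by norm_num, Real.log_inv]
      have hre : (Complex.log ζt).re = Real.log (‖ζt‖) := Complex.log_re ζt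
      have hge : 1 < ‖(Complex.log ζt)‖ :=
        calc (1:ℝ) < Real.log (17/3) := hlog17
          _ ≤ -(Real.log (‖ζt‖)) := by rw [hloginv] at hlogle; linarith
          _ = -(Complex.log ζt).re := by rw [hre]
          _ ≤ |(Complex.log ζt).re| := neg_le_abs _
          _ ≤ ‖(Complex.log ζt)‖ := Complex.abs_re_le_norm _
      have := hsub' t ht2
      rw [← hζt] at this
      linarith
  -- Step B : the Schwarz-type bound
  have hFb : ∀ y ∈ Metric.ball (0:ℂ) 1,
      ‖((α₁:ℂ) * y * deriv p y + (α₂:ℂ) * y^2 * deriv (deriv p) y)‖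
        ≤ 0.7 * ‖y‖ := by
    have hFd : DifferentiableOn ℂ (fun y => W y - 1) (Metric.ball (0:ℂ) 1) :=
      hWanal.differentiableOn.sub (differentiableOn_const 1)
    have hmaps : Set.MapsTo (fun y => W y - 1) (Metric.ball (0:ℂ) 1)
        (Metric.ball ((fun y => W y - 1) 0) 0.7) := by
      intro y hy
      simp only [hW0, sub_self, Metric.mem_ball, dist_zero_right]
      exact sigmoid_bound (hWne y hy) (hne' y hy) (hsub' y hy)
    intro y hy
    have hSch := Complex.dist_le_div_mul_dist_of_mapsTo_ball hFd (hmaps.mono_right ball_subset_closedBall) hy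
    simp only [hW0, sub_self, dist_zero_right, dist_eq_norm, sub_zero] at hSch
    have hWy : W y - 1 = (α₁:ℂ) * y * deriv p y + (α₂:ℂ) * y^2 * deriv (deriv p) y := by
      simp only [hWdef]; ring
    rw [hWy] at hSch
    calc ‖((α₁:ℂ) * y * deriv p y + (α₂:ℂ) * y^2 * deriv (deriv p) y)‖
        ≤ 0.7 / 1 * ‖y‖ := hSch
      _ = 0.7 * ‖y‖ := by norm_num
  -- Step E : bound on deriv p
  have haux : ∀ ζ ∈ Metric.ball (0:ℂ) 1, ζ ≠ 0 → ‖(deriv p ζ)‖ ≤ 0.7 / α₁ := by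
    intro ζ hζ hζ0
    have hD := stepD h₁ h₂ hds p hA1 hFb hζ
    rw [norm_mul] at hD
    have hζpos : 0 < ‖ζ‖ := norm_pos_iff.mpr hζ0
    calc ‖(deriv p ζ)‖ = ‖ζ‖ * ‖(deriv p ζ)‖ / ‖ζ‖ := by
          field_simp
      _ ≤ (0.7 * ‖ζ‖ / α₁) / ‖ζ‖ := by gcongr
      _ = 0.7 / α₁ := by
          field_simp
  have hp'b : ∀ ζ ∈ Metric.ball (0:ℂ) 1, ‖(deriv p ζ)‖ ≤ 0.7 / α₁ := by
    intro ζ hζ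
    rcases eq_or_ne ζ 0 with rfl | hζ0
    · have hcont : ContinuousAt (deriv p) 0 :=
        (hA1 0 (Metric.mem_ball_self one_pos)).continuousAt
      have htends : Filter.Tendsto (fun w => ‖(deriv p w)‖) (nhdsWithin (0:ℂ) {(0:ℂ)}ᶜ)
          (nhds (‖(deriv p 0)‖)) :=
        (continuous_norm.continuousAt.comp hcont).tendsto.mono_left nhdsWithin_le_nhds
      apply le_of_tendsto htends
      have hmemD : ∀ᶠ w in nhdsWithin (0:ℂ) {(0:ℂ)}ᶜ, w ∈ Metric.ball (0:ℂ) 1 :=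
        Filter.Eventually.filter_mono nhdsWithin_le_nhds
          (isOpen_ball.mem_nhds (Metric.mem_ball_self one_pos))
      filter_upwards [hmemD, self_mem_nhdsWithin] with w hw1 hw2
      exact haux w hw1 hw2
    · exact haux ζ hζ hζ0
  -- Step F : bound on p - 1
  have hpz : ∀ z ∈ Metric.ball (0:ℂ) 1,
      ‖(p z - 1)‖ ≤ ‖z‖ * (0.7 / α₁) := by
    intro z hz
    have hzn : ‖z‖ < 1 := by simpa using hz
    have hmem : ∀ s ∈ Set.Icc (0:ℝ) 1, (s:ℂ) * z ∈ Metric.ball (0:ℂ) 1 := by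
      intro s hs
      simp only [Metric.mem_ball, dist_zero_right, norm_mul,
        Complex.norm_real, Real.norm_eq_abs]
      rw [_root_.abs_of_nonneg hs.1]
      calc s * ‖z‖ ≤ 1 * ‖z‖ :=
            mul_le_mul_of_nonneg_right hs.2 (norm_nonneg z)
        _ = ‖z‖ := one_mul _
        _ < 1 := hzn
    have hψd : ∀ s ∈ Set.Icc (0:ℝ) 1, HasDerivWithinAt (fun s : ℝ => p ((s:ℂ)*z))
        (z * deriv p ((s:ℂ)*z)) (Set.Icc (0:ℝ) 1) s := by
      intro s hs
      have hlin : HasDerivAt (fun t:ℝ => (t:ℂ) * z) z s := by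
        simpa using ((hasDerivAt_id s).ofReal_comp.mul_const z)
      have hpd : HasDerivAt p (deriv p ((s:ℂ)*z)) ((s:ℂ)*z) :=
        (hp.differentiableAt (isOpen_ball.mem_nhds (hmem s hs))).hasDerivAt
      have := HasDerivAt.scomp s hpd hlin
      exact (by simpa [Function.comp_def, smul_eq_mul] using this : HasDerivAt _ _ s).hasDerivWithinAt
    have hbound : ∀ s ∈ Set.Ico (0:ℝ) 1, ‖z * deriv p ((s:ℂ)*z)‖ ≤ ‖z‖ * (0.7/α₁) := by
      intro s hs
      rw [norm_mul]
      exact mul_le_mul_of_nonneg_left (hp'b _ (hmem s (Set.Ico_subset_Icc_self hs)))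
        (norm_nonneg z)
    have key := norm_image_sub_le_of_norm_deriv_le_segment' hψd hbound 1 (by norm_num)
    norm_num at key
    rw [hp0] at key
    rw [show (0.7:ℝ) = 7/10 by norm_num]
    exact key
  -- Step G : conclusion
  intro z hz
  have hzn : ‖z‖ < 1 := by simpa using hz
  have hd1 : ‖(p z - 1)‖ < 0.4754 := by
    have h3 := hpz z hz
    have h4 : ‖z‖ * (0.7 / α₁) < 1 * (0.7 / α₁) :=
      mul_lt_mul_of_pos_right hzn (by positivity)
    have h5 : (0.7:ℝ) / α₁ < 0.7 / 1.4727 := by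
      apply div_lt_div_of_pos_left (by norm_num) (by norm_num) hα₁
    have : (0.7:ℝ)/1.4727 < 0.4754 := by norm_num
    linarith
  have hlt1 : ‖(p z - 1)‖ < 1 := by linarith
  have hlog := _root_.norm_log_one_add_le hlt1
  rw [show (1:ℂ) + (p z - 1) = p z by ring] at hlog
  have hden : (0:ℝ) < 1 - ‖(p z - 1)‖ := by linarith
  calc ‖(Complex.log (p z))‖
      ≤ ‖(p z - 1)‖ / (1 - ‖(p z - 1)‖) := hlog
    _ < 1 := by
        rw [div_lt_one hden]
        linarith
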